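/- Necessity of no negative cycles: if the allotment subspace multigraph Γ(A) of a feasible strict-LBDD allotment A contains a simple directed cycle of negative total cost, then A is not optimal; specifically, performing the cyclic reassignment along that cycle yields a feasible allotment of strictly smaller total cost. -/

import Mathlib

/-- Load of service center `s` under allotment `A`. -/
def load {D S : Type*} [Fintype D] [DecidableEq S] (A : D → S) (s : S) : ℕ :=
  (Finset.univ.filter fun x => A x = s).card

theorem neg_cycle_gives_better_feasible_allotment {D S : Type*}
    [Fintype D] [Fintype S] [DecidableEq D] [DecidableEq S]
    (CM : D → S → ℤ) (c : S → ℕ)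
    (A : D → S) (hA : ∀ s : S, load A s ≤ c s)
    (m : ℕ) (hm : 0 < m) (s : Fin m → S) (d : Fin m → D)
    (hs : Function.Injective s) (hd : Function.Injective d)
    (hAd : ∀ i, A (d i) = s i)
    (hneg : (∑ i : Fin m, (CM (d i) (s (finRotate m i)) - CM (d i) (s i))) < 0)
    (A' : D → S)
    (hA'1 : ∀ i, A' (d i) = s (finRotate m i))
    (hA'2 : ∀ x : D, (∀ i, x ≠ d i) → A' x = A x) :
    (∀ t : S, load A' t ≤ c t) ∧ (∑ x : D, CM x (A' x)) < ∑ x : D, CM x (A x) := by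
  classical
  set T : Finset D := Finset.univ.image d with hT
  have hmemT : ∀ x, x ∈ T ↔ ∃ i, d i = x := by
    intro x; simp [hT]
  have hA'x : ∀ x ∉ T, A' x = A x := by
    intro x hx
    apply hA'2
    intro i hxi
    exact hx ((hmemT x).2 ⟨i, hxi.symm⟩)
  have hdinj : ∀ x ∈ (Finset.univ : Finset (Fin m)), ∀ y ∈ (Finset.univ : Finset (Fin m)),
      d x = d y → x = y := fun x _ y _ h => hd h
  -- reindexing lemma along the rotation
  have key : ∀ (g : Fin m → Prop) [DecidablePred g],
      ((Finset.univ.filter fun i => g (finRotate m i))).card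
        = (Finset.univ.filter g).card := by
    intro g _
    apply Finset.card_bij (fun i _ => finRotate m i)
    · intro a ha; simpa using (Finset.mem_filter.mp ha).2
    · intro a _ b _ h; exact (finRotate m).injective h
    · intro b hb
      refine ⟨(finRotate m).symm b, ?_, Equiv.apply_symm_apply _ _⟩
      simpa only [Finset.mem_filter, Finset.mem_univ, true_and, Equiv.apply_symm_apply] using (Finset.mem_filter.mp hb).2
  constructor
  · intro t
    have hsplit : ∀ (B : D → S),
        (Finset.univ.filter fun x => B x = t).card
          = (T.filter fun x => B x = t).card + (Tᶜ.filter fun x => B x = t).card := by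
      intro B
      rw [← Finset.card_union_of_disjoint, ← Finset.filter_union, Finset.union_compl]
      exact Finset.disjoint_filter_filter disjoint_compl_right
    have hTpart : ∀ (B : D → S),
        (T.filter fun x => B x = t).card
          = (Finset.univ.filter fun i => B (d i) = t).card := by
      intro B
      rw [hT, Finset.filter_image, Finset.card_image_of_injOn (fun x _ y _ h => hd h)]
    have hcomp : (Tᶜ.filter fun x => A' x = t) = (Tᶜ.filter fun x => A x = t) := by
      apply Finset.filter_congr
      intro x hx
      rw [hA'x x (by simpa using hx)]
    have hload : load A' t = load A t := by
      unfold load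
      rw [hsplit A', hsplit A, hcomp, hTpart A', hTpart A]
      congr 1
      have h1 : (Finset.univ.filter fun i => A' (d i) = t)
          = (Finset.univ.filter fun i => s (finRotate m i) = t) := by
        apply Finset.filter_congr; intro i _; rw [hA'1 i]
      have h2 : (Finset.univ.filter fun i => A (d i) = t)
          = (Finset.univ.filter fun i => s i = t) := by
        apply Finset.filter_congr; intro i _; rw [hAd i]
      rw [h1, h2]
      exact key (fun i => s i = t)
    rw [hload]; exact hA t
  · have hsum : ∀ (B : D → S), ∑ x : D, CM x (B x)
        = ∑ i : Fin m, CM (d i) (B (d i)) + ∑ x ∈ Tᶜ, CM x (B x) := by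
      intro B
      rw [← Finset.sum_add_sum_compl T]
      congr 1
      rw [hT, Finset.sum_image hdinj]
    have hcompsum : ∑ x ∈ Tᶜ, CM x (A' x) = ∑ x ∈ Tᶜ, CM x (A x) :=
      Finset.sum_congr rfl fun x hx => by rw [hA'x x (by simpa using hx)]
    have h1 : ∑ i : Fin m, CM (d i) (A' (d i)) = ∑ i : Fin m, CM (d i) (s (finRotate m i)) :=
      Finset.sum_congr rfl fun i _ => by rw [hA'1 i]
    have h2 : ∑ i : Fin m, CM (d i) (A (d i)) = ∑ i : Fin m, CM (d i) (s i) :=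
      Finset.sum_congr rfl fun i _ => by rw [hAd i]
    rw [hsum A', hsum A, hcompsum, h1, h2]
    rw [Finset.sum_sub_distrib] at hneg
    linarith
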